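/- Let x, y ∈ X and suppose {n : T^n x and T^n y lie in the same atom of 𝒫} has upper density 1, where 𝒫 is a finite partition of X. Let 𝒫' be another finite partition and B a measurable set with μ(B) ≤ δ such that 𝒫 restricted to X \ B refines 𝒫'. If both x and y are generic for B, i.e., the visit times of each of T^n x and T^n y to B have density μ(B), then the set {n : T^n x and T^n y lie in the same atom of 𝒫'} has upper density at least 1 − 2δ. -/

import Mathlib

open MeasureTheory Filter
open scoped Classical

/-- Upper density of a set of natural numbers: `limsup_N #(S ∩ [1,N]) / N`. -/
noncomputable def upperDensity (S : Set ℕ) : ℝ :=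
  Filter.limsup (fun N : ℕ => (((Finset.Icc 1 N).filter (fun n => n ∈ S)).card : ℝ) / N)
    Filter.atTop

private lemma freq_nonneg (p : ℕ → Prop) [DecidablePred p] (N : ℕ) :
    (0 : ℝ) ≤ (((Finset.Icc 1 N).filter p).card : ℝ) / N :=
  div_nonneg (Nat.cast_nonneg _) (Nat.cast_nonneg _)

private lemma freq_le_one (p : ℕ → Prop) [DecidablePred p] (N : ℕ) :
    (((Finset.Icc 1 N).filter p).card : ℝ) / N ≤ 1 := by
  rcases Nat.eq_zero_or_pos N with h | h
  · simp [h]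
  · rw [div_le_one (by positivity)]
    have := Finset.card_filter_le (Finset.Icc 1 N) p
    have h2 : (Finset.Icc 1 N).card = N := by simp
    exact_mod_cast h2 ▸ this

/-- If the orbits of `x` and `y` fall in the same atom of the finite partition `P` with upper
density one, `P` refines the finite partition `P'` off a set `B` of measure at most `δ`, and
both `x` and `y` are generic for `B`, then the orbits fall in the same atom of `P'` with upper
density at least `1 - 2δ`. (Partitions are encoded as maps to finite index sets; atoms are
fibers.) -/
theorem stmt11 {X ι ι' : Type*} [Fintype ι] [Fintype ι'] [MeasurableSpace X]
    (μ : Measure X) [IsProbabilityMeasure μ] (T : X → X) (hT : MeasurePreserving T μ μ)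
    (P : X → ι) (P' : X → ι') (B : Set X) (hB : MeasurableSet B)
    (δ : ℝ) (hμB : (μ B).toReal ≤ δ)
    (hrefine : ∀ z w : X, z ∉ B → w ∉ B → P z = P w → P' z = P' w)
    (x y : X)
    (hud : upperDensity {n : ℕ | P (T^[n] x) = P (T^[n] y)} = 1)
    (hgx : Tendsto
      (fun N : ℕ => (((Finset.Icc 1 N).filter (fun n => T^[n] x ∈ B)).card : ℝ) / N)
      atTop (nhds (μ B).toReal))
    (hgy : Tendsto
      (fun N : ℕ => (((Finset.Icc 1 N).filter (fun n => T^[n] y ∈ B)).card : ℝ) / N)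
      atTop (nhds (μ B).toReal)) :
    1 - 2 * δ ≤ upperDensity {n : ℕ | P' (T^[n] x) = P' (T^[n] y)} := by
  set L : ℝ := (μ B).toReal with hL
  set f : ℕ → ℝ := fun N =>
    (((Finset.Icc 1 N).filter (fun n => n ∈ {n : ℕ | P (T^[n] x) = P (T^[n] y)})).card : ℝ) / N
    with hf
  set g : ℕ → ℝ := fun N =>
    (((Finset.Icc 1 N).filter (fun n => n ∈ {n : ℕ | P' (T^[n] x) = P' (T^[n] y)})).card : ℝ) / N
    with hg
  set bx : ℕ → ℝ := fun N =>
    (((Finset.Icc 1 N).filter (fun n => T^[n] x ∈ B)).card : ℝ) / N with hbx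
  set by' : ℕ → ℝ := fun N =>
    (((Finset.Icc 1 N).filter (fun n => T^[n] y ∈ B)).card : ℝ) / N with hby
  -- pointwise inequality
  have key : ∀ N, f N ≤ g N + bx N + by' N := by
    intro N
    have hsub : (Finset.Icc 1 N).filter (fun n => n ∈ {n : ℕ | P (T^[n] x) = P (T^[n] y)}) ⊆
        ((Finset.Icc 1 N).filter (fun n => n ∈ {n : ℕ | P' (T^[n] x) = P' (T^[n] y)})) ∪
        (((Finset.Icc 1 N).filter (fun n => T^[n] x ∈ B)) ∪
          ((Finset.Icc 1 N).filter (fun n => T^[n] y ∈ B))) := by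
      intro n hn
      simp only [Finset.mem_filter, Set.mem_setOf_eq] at hn
      by_cases hx : T^[n] x ∈ B
      · exact Finset.mem_union_right _ (Finset.mem_union_left _
          (Finset.mem_filter.2 ⟨hn.1, hx⟩))
      by_cases hy : T^[n] y ∈ B
      · exact Finset.mem_union_right _ (Finset.mem_union_right _
          (Finset.mem_filter.2 ⟨hn.1, hy⟩))
      · exact Finset.mem_union_left _ (Finset.mem_filter.2
          ⟨hn.1, hrefine _ _ hx hy hn.2⟩)
    have hcard := (Finset.card_le_card hsub).trans
      ((Finset.card_union_le _ _).trans (by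
        exact Nat.add_le_add_left (Finset.card_union_le _ _) _))
    have hcard' : ((((Finset.Icc 1 N).filter
        (fun n => n ∈ {n : ℕ | P (T^[n] x) = P (T^[n] y)})).card : ℝ)) ≤
        (((Finset.Icc 1 N).filter
          (fun n => n ∈ {n : ℕ | P' (T^[n] x) = P' (T^[n] y)})).card : ℝ) +
        (((Finset.Icc 1 N).filter (fun n => T^[n] x ∈ B)).card : ℝ) +
        (((Finset.Icc 1 N).filter (fun n => T^[n] y ∈ B)).card : ℝ) := by
      push_cast
      exact_mod_cast (by push_cast at hcard ⊢; linarith : _)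
    simp only [hf, hg, hbx, hby]
    rw [← add_div, ← add_div]
    exact div_le_div_of_nonneg_right hcard' (Nat.cast_nonneg N) |>.trans_eq rfl
  -- boundedness facts
  have hb_le : ∀ (p : ℕ → Prop) (_ : DecidablePred p), IsBoundedUnder (· ≤ ·)
      atTop (fun N : ℕ => (((Finset.Icc 1 N).filter p).card : ℝ) / N) := by
    intro p _
    exact isBoundedUnder_of ⟨1, fun N => freq_le_one p N⟩
  have hb_ge : ∀ (p : ℕ → Prop) (_ : DecidablePred p), IsBoundedUnder (· ≥ ·)
      atTop (fun N : ℕ => (((Finset.Icc 1 N).filter p).card : ℝ) / N) := by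
    intro p _
    exact isBoundedUnder_of ⟨0, fun N => freq_nonneg p N⟩
  have hgle : IsBoundedUnder (· ≤ ·) atTop g := hb_le _ _
  have hgge : IsBoundedUnder (· ≥ ·) atTop g := hb_ge _ _
  have hh : Tendsto (fun N => bx N + by' N) atTop (nhds (L + L)) := hgx.add hgy
  have hhle : IsBoundedUnder (· ≤ ·) atTop (fun N => bx N + by' N) :=
    hh.isBoundedUnder_le
  have hhlimsup : limsup (fun N => bx N + by' N) atTop = L + L := hh.limsup_eq
  have hcob : IsCoboundedUnder (· ≤ ·) atTop f := (hb_ge _ _).isCoboundedUnder_le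
  have hbd3 : IsBoundedUnder (· ≤ ·) atTop (fun N => g N + (bx N + by' N)) :=
    isBoundedUnder_of ⟨3, fun N => by
      have h1 := freq_le_one (fun n => n ∈ {n : ℕ | P' (T^[n] x) = P' (T^[n] y)}) N
      have h2 := freq_le_one (fun n => T^[n] x ∈ B) N
      have h3 := freq_le_one (fun n => T^[n] y ∈ B) N
      simp only [hg, hbx, hby]
      linarith⟩
  have step1 : (1 : ℝ) ≤ limsup (fun N => g N + (bx N + by' N)) atTop := by
    rw [← hud]
    exact limsup_le_limsup (Eventually.of_forall fun N => by
      have := key N; linarith) hcob hbd3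
  have step2 : limsup (fun N => g N + (bx N + by' N)) atTop ≤ limsup g atTop + (L + L) := by
    rw [← hhlimsup]
    exact limsup_add_le hgge hgle hh.isCoboundedUnder_le hhle
  have hLδ : L ≤ δ := hμB
  have : 1 - 2 * L ≤ limsup g atTop := by linarith [step1.trans step2]
  have hfinal : limsup g atTop = upperDensity {n : ℕ | P' (T^[n] x) = P' (T^[n] y)} := rfl
  linarith
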